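/- Novak's inequality: let Ω be a compact metric space with a probability measure μ and F a compact subset of C(Ω). Then the optimal error of numerical integration with m knots satisfies κ_m(F) ≤ 2 d_m(F, L_∞), where κ_m(F) := inf over points ξ^1,...,ξ^m ∈ Ω and weights λ_1,...,λ_m of sup_{f∈F} |∫_Ω f dμ − Σ_{j=1}^m λ_j f(ξ^j)|. -/

import Mathlib

open MeasureTheory
open scoped BigOperators

/-- The Kolmogorov width `d_m(F, L_∞)` of a set of continuous functions on a compact
space, with respect to the uniform norm. -/
noncomputable def kolWidthC {Ω : Type*} [TopologicalSpace Ω] [CompactSpace Ω]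
    (m : ℕ) (A : Set C(Ω, ℝ)) : ℝ :=
  ⨅ u : Fin m → C(Ω, ℝ), ⨆ f ∈ A, ⨅ c : Fin m → ℝ, ‖f - ∑ i, c i • u i‖

/-- The optimal error of numerical integration with `m` knots:
`κ_m(F) = inf_{ξ, λ} sup_{f ∈ F} |∫ f dμ - ∑_j λ_j f(ξ^j)|`. -/
noncomputable def kappa {Ω : Type*} [MetricSpace Ω] [CompactSpace Ω] [MeasurableSpace Ω]
    (μ : Measure Ω) (m : ℕ) (F : Set C(Ω, ℝ)) : ℝ :=
  ⨅ ξ : Fin m → Ω, ⨅ w : Fin m → ℝ, ⨆ f ∈ F, |(∫ x, f x ∂μ) - ∑ j, w j * f (ξ j)|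


lemma aux_pad {α : Type*} [AddCommMonoid α] [Module ℝ α] {ι : Type*} [Fintype ι] {N : ℕ}
    (e : ι ↪ Fin N) (w : ι → ℝ) (z : ι → α) {s : Set α} (hz : ∀ i, z i ∈ s)
    (hs : s.Nonempty) (hw : ∀ i, 0 ≤ w i) :
    ∃ (w' : Fin N → ℝ) (z' : Fin N → α), (∀ j, 0 ≤ w' j) ∧ (∀ j, z' j ∈ s) ∧
      (∑ j, w' j = ∑ i, w i) ∧ (∑ j, w' j • z' j = ∑ i, w i • z i) := by
  classical
  set w' : Fin N → ℝ := fun j => if h : ∃ i, e i = j then w h.choose else 0 with hw'def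
  set z' : Fin N → α := fun j => if h : ∃ i, e i = j then z h.choose else hs.choose with hz'def
  have key : ∀ i, w' (e i) = w i ∧ z' (e i) = z i := by
    intro i
    have h : ∃ i', e i' = e i := ⟨i, rfl⟩
    have hch : h.choose = i := e.injective h.choose_spec
    constructor
    · simp only [hw'def, dif_pos h, hch]
    · simp only [hz'def, dif_pos h, hch]
  have hzero : ∀ j, (¬ ∃ i, e i = j) → w' j = 0 := fun j hj => dif_neg hj
  have himg : ∀ j : Fin N, j ∉ Finset.univ.image e → w' j = 0 := by
    intro j hj
    exact hzero j (by simpa [Finset.mem_image] using hj)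
  refine ⟨w', z', ?_, ?_, ?_, ?_⟩
  · intro j
    by_cases h : ∃ i, e i = j
    · simp only [hw'def, dif_pos h]; exact hw _
    · simp [hw'def, dif_neg h]
  · intro j
    by_cases h : ∃ i, e i = j
    · simp only [hz'def, dif_pos h]; exact hz _
    · simp only [hz'def, dif_neg h]; exact hs.choose_spec
  · rw [← Finset.sum_subset (Finset.subset_univ (Finset.univ.image e))
      (fun j _ hj => himg j hj)]
    rw [Finset.sum_image (fun i _ i' _ h => e.injective h)]
    exact Finset.sum_congr rfl fun i _ => (key i).1
  · rw [← Finset.sum_subset (Finset.subset_univ (Finset.univ.image e))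
      (fun j _ hj => by rw [himg j hj, zero_smul])]
    rw [Finset.sum_image (fun i _ i' _ h => e.injective h)]
    exact Finset.sum_congr rfl fun i _ => by rw [(key i).1, (key i).2]

lemma caratheodory_fin {m : ℕ} {S : Set (Fin m → ℝ)} (hS : S.Nonempty) {b : Fin m → ℝ}
    (hb : b ∈ convexHull ℝ S) :
    ∃ (v : Fin (m + 1) → Fin m → ℝ) (w : Fin (m + 1) → ℝ), (∀ i, v i ∈ S) ∧
      (∀ i, 0 ≤ w i) ∧ ∑ i, w i = 1 ∧ ∑ i, w i • v i = b := by
  obtain ⟨ι, hfin, z, w, hzS, hai, hwpos, hw1, hsum⟩ := eq_pos_convex_span_of_mem_convexHull hb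
  have hcard : Fintype.card ι ≤ m + 1 := by
    have h1 := hai.card_le_finrank_succ
    have h2 : Module.finrank ℝ (vectorSpan ℝ (Set.range z)) ≤ Module.finrank ℝ (Fin m → ℝ) :=
      Submodule.finrank_le _
    have h3 : Module.finrank ℝ (Fin m → ℝ) = m := by
      simp [Module.finrank_fintype_fun_eq_card]
    omega
  obtain ⟨e⟩ := Function.Embedding.nonempty_of_card_le (β := Fin (m + 1)) (by simpa using hcard)
  obtain ⟨w', v', hw', hv', hsum1, hsum2⟩ :=
    aux_pad e w z (fun i => hzS (Set.mem_range_self i)) hS (fun i => (hwpos i).le)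
  exact ⟨v', w', hv', hw', hsum1.trans hw1, hsum2.trans hsum⟩

lemma isClosed_convexHull_of_isCompact {m : ℕ} {s : Set (Fin m → ℝ)} (hs : IsCompact s)
    (hne : s.Nonempty) : IsClosed (convexHull ℝ s) := by
  have himg : convexHull ℝ s =
      (fun p : (Fin (m + 1) → ℝ) × (Fin (m + 1) → Fin m → ℝ) => ∑ i, p.1 i • p.2 i) ''
        (stdSimplex ℝ (Fin (m + 1)) ×ˢ Set.univ.pi fun _ => s) := by
    apply Set.Subset.antisymm
    · intro b hb
      obtain ⟨v, w, hv, hw, hw1, hsum⟩ := caratheodory_fin hne hb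
      exact ⟨(w, v), ⟨⟨hw, hw1⟩, fun i _ => hv i⟩, hsum⟩
    · rintro x ⟨⟨w, z⟩, ⟨⟨hw0, hw1⟩, hz⟩, rfl⟩
      exact (convex_convexHull ℝ s).sum_mem (fun i _ => hw0 i) hw1
        (fun i _ => subset_convexHull ℝ s (hz i (Set.mem_univ i)))
  rw [himg]
  refine (((isCompact_stdSimplex _ _).prod (isCompact_univ_pi fun _ => hs)).image ?_).isClosed
  exact continuous_finset_sum _ fun i _ =>
    ((continuous_apply i).comp continuous_fst).smul ((continuous_apply i).comp continuous_snd)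


lemma exists_dependence {m : ℕ} (v : Fin (m + 1) → Fin m → ℝ) :
    ∃ c : Fin (m + 1) → ℝ, ∑ j, c j • v j = 0 ∧ 0 ≤ ∑ j, c j ∧ ∃ j, 0 < c j := by
  have hnli : ¬ LinearIndependent ℝ v := by
    intro h
    have h1 := h.fintype_card_le_finrank
    have h3 : Module.finrank ℝ (Fin m → ℝ) = m := by
      simp [Module.finrank_fintype_fun_eq_card]
    simp [h3] at h1
  obtain ⟨g, hg, i, hi⟩ := Fintype.not_linearIndependent_iff.mp hnli
  have hposneg : ∀ (c : Fin (m+1) → ℝ), (∃ j, c j ≠ 0) → 0 < ∑ j, c j ∨ ∑ j, c j < 0 ∨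
      (∑ j, c j = 0) := by
    intro c _; rcases lt_trichotomy 0 (∑ j, c j) with h | h | h
    · exact Or.inl h
    · exact Or.inr (Or.inr h.symm)
    · exact Or.inr (Or.inl h)
  have hneg : ∑ j, (-g) j • v j = 0 := by
    simp only [Pi.neg_apply, neg_smul, Finset.sum_neg_distrib, hg, neg_zero]
  rcases lt_trichotomy (∑ j, g j) 0 with h | h | h
  · refine ⟨-g, hneg, ?_, ?_⟩
    · simp only [Pi.neg_apply, Finset.sum_neg_distrib]; linarith
    · obtain ⟨j, hj⟩ : ∃ j, g j < 0 := by
        by_contra hcon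
        push_neg at hcon
        have : (0:ℝ) ≤ ∑ j, g j := Finset.sum_nonneg fun j _ => hcon j
        linarith
      exact ⟨j, by simpa using hj⟩
  · by_cases hgi : 0 < g i
    · exact ⟨g, hg, by rw [h], ⟨i, hgi⟩⟩
    · refine ⟨-g, hneg, ?_, ?_⟩
      · simp only [Pi.neg_apply, Finset.sum_neg_distrib]; linarith
      · exact ⟨i, by simp only [Pi.neg_apply]; cases (hi.lt_or_gt) with
          | inl h' => simpa using h'
          | inr h' => exact absurd h' hgi⟩
  · refine ⟨g, hg, h.le, ?_⟩
    obtain ⟨j, hj⟩ : ∃ j, 0 < g j := by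
      by_contra hcon
      push_neg at hcon
      have : ∑ j, g j ≤ 0 := Finset.sum_nonpos fun j _ => hcon j
      linarith
    exact ⟨j, hj⟩

lemma reduce_step {m : ℕ} (v : Fin (m + 1) → Fin m → ℝ) (w : Fin (m + 1) → ℝ)
    (hw : ∀ i, 0 ≤ w i) (hw1 : ∑ i, w i ≤ 1) :
    ∃ (w' : Fin (m + 1) → ℝ) (j₀ : Fin (m + 1)), (∀ j, 0 ≤ w' j) ∧ w' j₀ = 0 ∧
      ∑ j, w' j ≤ 1 ∧ ∑ j, w' j • v j = ∑ j, w j • v j := by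
  classical
  obtain ⟨c, hc0, hcs, j₁, hj₁⟩ := exists_dependence v
  set J : Finset (Fin (m + 1)) := Finset.univ.filter fun j => 0 < c j with hJ
  have hJne : J.Nonempty := ⟨j₁, by simp [hJ, hj₁]⟩
  obtain ⟨j₀, hj₀J, hj₀min⟩ := J.exists_min_image (fun j => w j / c j) hJne
  have hcj₀ : 0 < c j₀ := by simpa [hJ] using hj₀J
  set t : ℝ := w j₀ / c j₀ with ht
  have ht0 : 0 ≤ t := div_nonneg (hw j₀) hcj₀.le
  refine ⟨fun j => w j - t * c j, j₀, ?_, ?_, ?_, ?_⟩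
  · intro j
    show 0 ≤ w j - t * c j
    rcases le_or_gt (c j) 0 with h | h
    · have : t * c j ≤ 0 := mul_nonpos_of_nonneg_of_nonpos ht0 h
      have := hw j; linarith
    · have hjJ : j ∈ J := by simp [hJ, h]
      have := hj₀min j hjJ
      have : t * c j ≤ w j := by
        rw [ht]
        calc w j₀ / c j₀ * c j ≤ w j / c j * c j := by
              apply mul_le_mul_of_nonneg_right (hj₀min j hjJ) h.le
          _ = w j := div_mul_cancel₀ _ h.ne'
      linarith
  · show w j₀ - t * c j₀ = 0
    rw [ht, div_mul_cancel₀ _ hcj₀.ne']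
    ring
  · show ∑ j, (w j - t * c j) ≤ 1
    have h1 : ∑ j, (w j - t * c j) = ∑ j, w j - t * ∑ j, c j := by
      rw [Finset.sum_sub_distrib, Finset.mul_sum]
    have h2 : 0 ≤ t * ∑ j, c j := mul_nonneg ht0 hcs
    rw [h1]; linarith
  · show ∑ j, (w j - t * c j) • v j = ∑ j, w j • v j
    have : ∑ j, (w j - t * c j) • v j = ∑ j, w j • v j - t • ∑ j, c j • v j := by
      rw [Finset.smul_sum, ← Finset.sum_sub_distrib]
      refine Finset.sum_congr rfl fun j _ => ?_
      rw [sub_smul, mul_smul]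
    rw [this, hc0, smul_zero, sub_zero]

/-- Novak's inequality: for a compact metric space `Ω` with a Borel probability
measure `μ` and a compact `F ⊆ C(Ω)`, `κ_m(F) ≤ 2 d_m(F, L_∞)`. -/
theorem novak_inequality {Ω : Type*} [MetricSpace Ω] [CompactSpace Ω]
    [MeasurableSpace Ω] [BorelSpace Ω] (μ : Measure Ω) [IsProbabilityMeasure μ]
    (F : Set C(Ω, ℝ)) (hF : IsCompact F) (m : ℕ) :
    kappa μ m F ≤ 2 * kolWidthC m F := by
  have hΩ : Nonempty Ω := by
    by_contra h
    rw [not_nonempty_iff] at h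
    have h1 := measure_univ (μ := μ)
    rw [Set.univ_eq_empty_iff.mpr h, measure_empty] at h1
    simp at h1
  have hint : ∀ h : C(Ω, ℝ), Integrable (fun x => h x) μ := fun h =>
    h.continuous.integrable_of_hasCompactSupport
      (isCompact_univ.of_isClosed_subset (isClosed_tsupport _) (Set.subset_univ _))
  have main : ∀ u : Fin m → C(Ω, ℝ),
      kappa μ m F ≤ 2 * ⨆ f ∈ F, ⨅ c : Fin m → ℝ, ‖f - ∑ i, c i • u i‖ := by
    intro u
    set T : Ω → (Fin m → ℝ) := fun x i => u i x with hT
    have hTc : Continuous T := continuous_pi fun i => (u i).continuous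
    have hTint : Integrable T μ := hTc.integrable_of_hasCompactSupport
      (isCompact_univ.of_isClosed_subset (isClosed_tsupport _) (Set.subset_univ _))
    set S : Set (Fin m → ℝ) := Set.range T with hS
    have hSne : S.Nonempty := Set.range_nonempty T
    have hScomp : IsCompact S := isCompact_range hTc
    set b : Fin m → ℝ := ∫ x, T x ∂μ with hb
    have hbmem : b ∈ convexHull ℝ S :=
      (convex_convexHull ℝ S).integral_mem (isClosed_convexHull_of_isCompact hScomp hSne)
        (Filter.Eventually.of_forall fun x => subset_convexHull ℝ S (Set.mem_range_self x)) hTint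
    obtain ⟨v, w, hvS, hw0, hw1, hsum⟩ := caratheodory_fin hSne hbmem
    obtain ⟨w', j₀, hw'0, hw'j₀, hw'1, hsum'⟩ := reduce_step v w hw0 hw1.le
    set wf : Fin m → ℝ := fun i => w' (j₀.succAbove i) with hwf
    have hwf0 : ∀ i, 0 ≤ wf i := fun i => hw'0 _
    have hwf1 : ∑ i, wf i ≤ 1 := by
      have h := Fin.sum_univ_succAbove (fun j => w' j) j₀
      rw [hw'j₀, zero_add] at h
      calc ∑ i, wf i = ∑ j, w' j := h.symm
        _ ≤ 1 := hw'1
    have hξex : ∀ i : Fin m, ∃ x : Ω, T x = v (j₀.succAbove i) := fun i => hvS _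
    choose ξp hξp using hξex
    have hbrep : ∑ j, wf j • T (ξp j) = b := by
      have h := Fin.sum_univ_succAbove (fun j => w' j • v j) j₀
      rw [hw'j₀, zero_smul, zero_add] at h
      calc ∑ j, wf j • T (ξp j) = ∑ j, w' (j₀.succAbove j) • v (j₀.succAbove j) := by
            refine Finset.sum_congr rfl fun j _ => ?_
            rw [hξp j]
        _ = ∑ j, w' j • v j := h.symm
        _ = ∑ j, w j • v j := hsum'
        _ = b := hsum
    have hquad : ∀ i : Fin m, ∑ j, wf j * u i (ξp j) = b i := by
      intro i
      have h := congrFun hbrep i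
      simpa [Finset.sum_apply] using h
    have hbi_int : ∀ i, b i = ∫ x, u i x ∂μ := by
      intro i
      have h := ContinuousLinearMap.integral_comp_comm
        (ContinuousLinearMap.proj (R := ℝ) (φ := fun _ : Fin m => ℝ) i) hTint
      simpa using h.symm
    -- pointwise error bound
    have herr : ∀ f ∈ F, |(∫ x, f x ∂μ) - ∑ j, wf j * f (ξp j)|
        ≤ 2 * ⨅ c : Fin m → ℝ, ‖f - ∑ i, c i • u i‖ := by
      intro f hf
      have hc : ∀ c : Fin m → ℝ,
          |(∫ x, f x ∂μ) - ∑ j, wf j * f (ξp j)| ≤ 2 * ‖f - ∑ i, c i • u i‖ := by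
        intro c
        set g : C(Ω, ℝ) := ∑ i, c i • u i with hg
        have hgx : ∀ x, g x = ∑ i, c i * u i x := by
          intro x
          simp [hg]
        have hgint : ∫ x, g x ∂μ = ∑ i, c i * b i := by
          calc ∫ x, g x ∂μ = ∫ x, ∑ i, c i * u i x ∂μ := by
                refine integral_congr_ae (Filter.Eventually.of_forall fun x => hgx x)
            _ = ∑ i, ∫ x, c i * u i x ∂μ :=
                integral_finset_sum _ fun i _ => (hint (u i)).const_mul _
            _ = ∑ i, c i * ∫ x, u i x ∂μ := by
                refine Finset.sum_congr rfl fun i _ => integral_const_mul _ _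
            _ = ∑ i, c i * b i := by
                refine Finset.sum_congr rfl fun i _ => by rw [hbi_int i]
        have hgquad : ∑ j, wf j * g (ξp j) = ∑ i, c i * b i := by
          calc ∑ j, wf j * g (ξp j) = ∑ j, ∑ i, wf j * (c i * u i (ξp j)) := by
                refine Finset.sum_congr rfl fun j _ => by rw [hgx, Finset.mul_sum]
            _ = ∑ i, ∑ j, wf j * (c i * u i (ξp j)) := Finset.sum_comm
            _ = ∑ i, c i * ∑ j, wf j * u i (ξp j) := by
                refine Finset.sum_congr rfl fun i _ => ?_
                rw [Finset.mul_sum]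
                exact Finset.sum_congr rfl fun j _ => by ring
            _ = ∑ i, c i * b i := by
                refine Finset.sum_congr rfl fun i _ => by rw [hquad i]
        have key : (∫ x, f x ∂μ) - ∑ j, wf j * f (ξp j)
            = (∫ x, (f x - g x) ∂μ) - ∑ j, wf j * (f (ξp j) - g (ξp j)) := by
          rw [integral_sub (hint f) (hint g)]
          have hs2 : ∑ j, wf j * (f (ξp j) - g (ξp j))
              = ∑ j, wf j * f (ξp j) - ∑ j, wf j * g (ξp j) := by
            rw [← Finset.sum_sub_distrib]
            exact Finset.sum_congr rfl fun j _ => by ring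
          rw [hs2, hgint, hgquad]
          ring
        have hnorm : ∀ x, |f x - g x| ≤ ‖f - g‖ := by
          intro x
          calc |f x - g x| = ‖(f - g) x‖ := by
                rw [ContinuousMap.sub_apply, Real.norm_eq_abs]
            _ ≤ ‖f - g‖ := ContinuousMap.norm_coe_le_norm _ x
        have h1 : |∫ x, (f x - g x) ∂μ| ≤ ‖f - g‖ := by
          have h := norm_integral_le_of_norm_le_const (μ := μ)
            (f := fun x => f x - g x) (C := ‖f - g‖)
            (Filter.Eventually.of_forall fun x => by
              rw [Real.norm_eq_abs]; exact hnorm x)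
          simpa [measure_univ, Real.norm_eq_abs] using h
        have h2 : |∑ j, wf j * (f (ξp j) - g (ξp j))| ≤ ‖f - g‖ := by
          calc |∑ j, wf j * (f (ξp j) - g (ξp j))|
              ≤ ∑ j, |wf j * (f (ξp j) - g (ξp j))| := Finset.abs_sum_le_sum_abs _ _
            _ = ∑ j, wf j * |f (ξp j) - g (ξp j)| := by
                refine Finset.sum_congr rfl fun j _ => by
                  rw [abs_mul, abs_of_nonneg (hwf0 j)]
            _ ≤ ∑ j, wf j * ‖f - g‖ :=
                Finset.sum_le_sum fun j _ => mul_le_mul_of_nonneg_left (hnorm _) (hwf0 j)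
            _ = (∑ j, wf j) * ‖f - g‖ := (Finset.sum_mul _ _ _).symm
            _ ≤ 1 * ‖f - g‖ := mul_le_mul_of_nonneg_right hwf1 (norm_nonneg _)
            _ = ‖f - g‖ := one_mul _
        rw [key]
        calc |(∫ x, (f x - g x) ∂μ) - ∑ j, wf j * (f (ξp j) - g (ξp j))|
            ≤ |∫ x, (f x - g x) ∂μ| + |∑ j, wf j * (f (ξp j) - g (ξp j))| := by
              have h := abs_add_le (∫ x, (f x - g x) ∂μ) (-(∑ j, wf j * (f (ξp j) - g (ξp j))))
              simpa [sub_eq_add_neg, abs_neg] using h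
          _ ≤ ‖f - g‖ + ‖f - g‖ := add_le_add h1 h2
          _ = 2 * ‖f - g‖ := by ring
      have hinf : |(∫ x, f x ∂μ) - ∑ j, wf j * f (ξp j)| / 2
          ≤ ⨅ c : Fin m → ℝ, ‖f - ∑ i, c i • u i‖ :=
        le_ciInf fun c => by have := hc c; linarith
      linarith [hinf]
    -- combine into suprema
    set D : ℝ := ⨆ f ∈ F, ⨅ c : Fin m → ℝ, ‖f - ∑ i, c i • u i‖ with hD
    have hD0 : 0 ≤ D := Real.iSup_nonneg fun f => Real.iSup_nonneg fun _ =>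
      Real.iInf_nonneg fun c => norm_nonneg _
    have hkG : kappa μ m F ≤ ⨆ f ∈ F, |(∫ x, f x ∂μ) - ∑ j, wf j * f (ξp j)| := by
      have hbdd : ∀ (ξ : Fin m → Ω) (wq : Fin m → ℝ),
          0 ≤ ⨆ f ∈ F, |(∫ x, f x ∂μ) - ∑ j, wq j * f (ξ j)| := fun ξ wq =>
        Real.iSup_nonneg fun f => Real.iSup_nonneg fun _ => abs_nonneg _
      unfold kappa
      refine ciInf_le_of_le ⟨0, ?_⟩ ξp (ciInf_le_of_le ⟨0, ?_⟩ wf le_rfl)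
      · rintro x ⟨ξ, rfl⟩
        exact Real.iInf_nonneg fun wq => hbdd ξ wq
      · rintro x ⟨wq, rfl⟩
        exact hbdd ξp wq
    have hGD : (⨆ f ∈ F, |(∫ x, f x ∂μ) - ∑ j, wf j * f (ξp j)|) ≤ 2 * D := by
      obtain ⟨R, hR⟩ := isBounded_iff_forall_norm_le.mp hF.isBounded
      have hBf_le : ∀ f : C(Ω, ℝ), f ∈ F →
          (⨅ c : Fin m → ℝ, ‖f - ∑ i, c i • u i‖) ≤ max R 0 := by
        intro f hf
        have h0 : (⨅ c : Fin m → ℝ, ‖f - ∑ i, c i • u i‖)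
            ≤ ‖f - ∑ i, (fun _ : Fin m => (0:ℝ)) i • u i‖ :=
          ciInf_le ⟨0, by rintro x ⟨c, rfl⟩; exact norm_nonneg _⟩ _
        have h0' : (⨅ c : Fin m → ℝ, ‖f - ∑ i, c i • u i‖) ≤ ‖f‖ := by
          simpa using h0
        exact h0'.trans ((hR f hf).trans (le_max_left _ _))
      have hbddD : BddAbove (Set.range fun f : C(Ω, ℝ) =>
          ⨆ _ : f ∈ F, ⨅ c : Fin m → ℝ, ‖f - ∑ i, c i • u i‖) := by
        refine ⟨max R 0, ?_⟩
        rintro x ⟨f, rfl⟩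
        exact Real.iSup_le (fun hf => hBf_le f hf) (le_max_right _ _)
      refine Real.iSup_le (fun f => Real.iSup_le (fun hf => ?_) (by linarith)) (by linarith)
      have h1 := herr f hf
      have h2 : (⨅ c : Fin m → ℝ, ‖f - ∑ i, c i • u i‖) ≤ D := by
        have h3 : (⨅ c : Fin m → ℝ, ‖f - ∑ i, c i • u i‖)
            ≤ ⨆ _ : f ∈ F, ⨅ c : Fin m → ℝ, ‖f - ∑ i, c i • u i‖ := by
          refine le_ciSup (f := fun _ : f ∈ F => ⨅ c : Fin m → ℝ, ‖f - ∑ i, c i • u i‖) ?_ hf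
          exact ⟨⨅ c : Fin m → ℝ, ‖f - ∑ i, c i • u i‖, by rintro x ⟨hf', rfl⟩; rfl⟩
        exact h3.trans (le_ciSup hbddD f)
      linarith
    exact hkG.trans hGD
  have h2 : ∀ u : Fin m → C(Ω, ℝ),
      kappa μ m F / 2 ≤ ⨆ f ∈ F, ⨅ c : Fin m → ℝ, ‖f - ∑ i, c i • u i‖ := fun u => by
    have := main u; linarith
  have h3 : kappa μ m F / 2 ≤ kolWidthC m F := le_ciInf h2
  linarith
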